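/- There exists a map m : ℕ × ℕ → ℕ such that for all h, l, n ∈ ℕ, the interval [n, n + m(h,l)] contains a set S with the following properties: (i) S = ∪_{i=1}^{h} [x_i, x_i + 2l] for some strictly increasing sequence x_1 < x_2 < ... < x_h of positive integers; (ii) gcd(a, b) ∈ T(l) for all distinct a, b ∈ S. -/

import Mathlib

/-- `r(p,l)`: the largest `t` with `p ^ t ≤ 2 * l + 1`. -/
def rpl (p l : ℕ) : ℕ := Nat.findGreatest (fun t => p ^ t ≤ 2 * l + 1) (2 * l + 1)

/-- `T(l)`: products `∏_{p prime, p ≤ 2l+1} p ^ (r_p)` with `0 ≤ r_p ≤ r(p,l)`. -/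
def Tset (l : ℕ) : Set ℕ :=
  {m | ∃ r : ℕ → ℕ, (∀ p, r p ≤ rpl p l) ∧
    m = ∏ p ∈ (Finset.range (2 * l + 2)).filter Nat.Prime, p ^ r p}

/- ---------------- auxiliary definitions ---------------- -/

/-- A bound on primes handled by congruences. -/
def Bql (h l : ℕ) : ℕ := (h + 1) * (2 * l + 1)

/-- The spacing modulus. -/
def Qql (h l : ℕ) : ℕ :=
  ∏ p ∈ (Finset.range (Bql h l + 1)).filter Nat.Prime, p ^ (rpl p l + 1)

/-- Product of all possible cross-block differences. -/
def Rql (h l : ℕ) : ℕ :=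
  ∏ k ∈ Finset.Icc 1 (h - 1), ∏ w ∈ Finset.range (4 * l + 1), (k * Qql h l + w - 2 * l)

/-- The CRT modulus. -/
def Mql (h l : ℕ) : ℕ :=
  ∏ p ∈ (Qql h l * Rql h l).primeFactors, p ^ (rpl p l + 1)

/- ---------------- lemmas about rpl ---------------- -/

lemma rpl_succ_gt {p : ℕ} (l : ℕ) (hp : 2 ≤ p) : 2 * l + 1 < p ^ (rpl p l + 1) := by
  by_contra hle
  push_neg at hle
  have h1 : 2 ^ (rpl p l + 1) ≤ p ^ (rpl p l + 1) := Nat.pow_le_pow_left hp _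
  have h2 : rpl p l + 1 < 2 ^ (rpl p l + 1) := Nat.lt_two_pow_self
  have h3 : rpl p l + 1 ≤ 2 * l + 1 := by omega
  have h4 : rpl p l + 1 ≤ rpl p l :=
    Nat.le_findGreatest (P := fun t => p ^ t ≤ 2 * l + 1) h3 hle
  omega

lemma rpl_eq_zero_of_big {p l : ℕ} (hp : 2 * l + 1 < p) : rpl p l = 0 := by
  unfold rpl
  rw [Nat.findGreatest_eq_zero_iff]
  intro m hm _ hP
  have : p ≤ p ^ m := Nat.le_self_pow (by omega) p
  omega

lemma pow_rpl_le {p l : ℕ} (h : 0 < rpl p l) : p ^ rpl p l ≤ 2 * l + 1 := by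
  have := (Nat.findGreatest_eq_iff
    (P := fun t => p ^ t ≤ 2 * l + 1) (m := rpl p l) (k := 2 * l + 1)).mp rfl
  exact this.2.1 (by omega)

/- ---------------- membership in Tset ---------------- -/

lemma mem_Tset_of_factorization {l g : ℕ} (hg : 0 < g)
    (hfac : ∀ p, Nat.Prime p → g.factorization p ≤ rpl p l) : g ∈ Tset l := by
  refine ⟨fun p => g.factorization p, ?_, ?_⟩
  · intro p
    by_cases hp : p.Prime
    · exact hfac p hp
    · simp [Nat.factorization_eq_zero_of_not_prime g hp]
  · have hsub : g.primeFactors ⊆ (Finset.range (2 * l + 2)).filter Nat.Prime := by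
      intro p hp
      rw [Nat.mem_primeFactors] at hp
      obtain ⟨hp1, hp2, _⟩ := hp
      have h1 : 0 < g.factorization p := hp1.factorization_pos_of_dvd hg.ne' hp2
      have h2 : 0 < rpl p l := lt_of_lt_of_le h1 (hfac p hp1)
      have h3 : p ^ rpl p l ≤ 2 * l + 1 := pow_rpl_le h2
      have h4 : p ≤ p ^ rpl p l := Nat.le_self_pow h2.ne' p
      exact Finset.mem_filter.mpr ⟨Finset.mem_range.mpr (by omega), hp1⟩
    conv_lhs => rw [← Nat.factorization_prod_pow_eq_self hg.ne']
    rw [Finsupp.prod, Nat.support_factorization]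
    exact Finset.prod_subset hsub (fun p _ hnot => by
      have h0 : g.factorization p = 0 := by
        rw [← Nat.factorization_prod_pow_eq_self hg.ne'] at hnot
        by_contra hne
        exact hnot (by
          rw [← Nat.support_factorization]
          exact Finsupp.mem_support_iff.mpr (by
            rw [Nat.factorization_prod_pow_eq_self hg.ne']; exact hne))
      simp [h0])

/- ---------------- CRT over a finite set of primes ---------------- -/

lemma crt_primes (k c : ℕ → ℕ) :
    ∀ s : Finset ℕ, (∀ p ∈ s, Nat.Prime p) →
      ∃ X : ℕ, ∀ p ∈ s, X ≡ c p [MOD p ^ k p] := by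
  intro s
  induction s using Finset.induction_on with
  | empty => exact fun _ => ⟨0, by simp⟩
  | @insert a s ha ih =>
    intro hs
    obtain ⟨X', hX'⟩ := ih (fun p hp => hs p (Finset.mem_insert_of_mem hp))
    have hcop : Nat.Coprime (a ^ k a) (∏ q ∈ s, q ^ k q) := by
      apply Nat.Coprime.prod_right
      intro q hq
      exact Nat.Coprime.pow _ _
        ((Nat.coprime_primes (hs a (Finset.mem_insert_self a s))
          (hs q (Finset.mem_insert_of_mem hq))).mpr (by rintro rfl; exact ha hq))
    obtain ⟨X, h1, h2⟩ := Nat.chineseRemainder hcop (c a) X'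
    refine ⟨X, fun p hp => ?_⟩
    rcases Finset.mem_insert.mp hp with rfl | hp'
    · exact h1
    · exact (Nat.ModEq.of_dvd
        (Finset.dvd_prod_of_mem (fun q => q ^ k q) hp') h2).trans (hX' p hp')

/- ---------------- pigeonhole residue ---------------- -/

lemma exists_good_residue {p : ℕ} (hp : p.Prime) (A : Finset ℕ) (hA : A.card < p) :
    ∃ c : ℕ, ∀ a ∈ A, ¬ (p ∣ c + a) := by
  haveI : Fact p.Prime := ⟨hp⟩
  classical
  have hTcard : (A.image (fun a : ℕ => -(a : ZMod p))).card < Fintype.card (ZMod p) := by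
    rw [ZMod.card]
    exact lt_of_le_of_lt Finset.card_image_le hA
  have hcompl : ((A.image (fun a : ℕ => -(a : ZMod p)))ᶜ).Nonempty := by
    rw [← Finset.card_pos, Finset.card_compl]
    omega
  obtain ⟨z, hz⟩ := hcompl
  rw [Finset.mem_compl, Finset.mem_image] at hz
  push_neg at hz
  refine ⟨z.val, fun a ha hdvd => hz a ha ?_⟩
  have h0 : ((z.val + a : ℕ) : ZMod p) = 0 := (ZMod.natCast_eq_zero_iff _ _).mpr hdvd
  push_cast at h0
  rw [ZMod.natCast_val, ZMod.cast_id] at h0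
  exact neg_eq_of_add_eq_zero_left h0

/- ---------------- choosing good residues ---------------- -/

lemma exists_good_c {h l : ℕ} (hh : 0 < h) (hl : 0 < l) (p : ℕ) (hp : p.Prime) :
    ∃ c : ℕ, ∀ i s : ℕ, i < h → s ≤ 2 * l →
      ¬ (p ^ (rpl p l + 1) ∣ c + (i * Qql h l + s)) := by
  by_cases hQ : p ^ (rpl p l + 1) ∣ Qql h l
  · refine ⟨1, fun i s hi hs hdvd => ?_⟩
    have h1 : p ^ (rpl p l + 1) ∣ i * Qql h l := Dvd.dvd.mul_left hQ i
    have h2 : p ^ (rpl p l + 1) ∣ (1 + (i * Qql h l + s)) - i * Qql h l :=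
      Nat.dvd_sub hdvd h1
    have h3 : (1 + (i * Qql h l + s)) - i * Qql h l = 1 + s := by omega
    rw [h3] at h2
    have h4 := Nat.le_of_dvd (by omega) h2
    have h5 := rpl_succ_gt l hp.two_le
    omega
  · have hpB : Bql h l < p := by
      by_contra hle
      push_neg at hle
      exact hQ (Finset.dvd_prod_of_mem (fun q => q ^ (rpl q l + 1))
        (Finset.mem_filter.mpr ⟨Finset.mem_range.mpr (by omega), hp⟩))
    have hBge : h * (2 * l + 1) + (2 * l + 1) ≤ Bql h l :=
      le_of_eq (by unfold Bql; ring)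
    have hr0 : rpl p l = 0 := rpl_eq_zero_of_big (by omega)
    have hcard : (((Finset.range h ×ˢ Finset.range (2 * l + 1)).image
        (fun q : ℕ × ℕ => q.1 * Qql h l + q.2))).card < p := by
      calc ((Finset.range h ×ˢ Finset.range (2 * l + 1)).image
            (fun q : ℕ × ℕ => q.1 * Qql h l + q.2)).card
          ≤ (Finset.range h ×ˢ Finset.range (2 * l + 1)).card := Finset.card_image_le
        _ = h * (2 * l + 1) := by rw [Finset.card_product, Finset.card_range, Finset.card_range]
        _ < p := by omega
    obtain ⟨c, hc⟩ := exists_good_residue hp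
      ((Finset.range h ×ˢ Finset.range (2 * l + 1)).image
        (fun q : ℕ × ℕ => q.1 * Qql h l + q.2)) hcard
    refine ⟨c, fun i s hi hs hdvd => ?_⟩
    rw [hr0, pow_one] at hdvd
    exact hc _ (Finset.mem_image.mpr ⟨(i, s),
      Finset.mem_product.mpr ⟨Finset.mem_range.mpr hi,
        Finset.mem_range.mpr (by omega)⟩, rfl⟩) hdvd

/- ---------------- the theorem ---------------- -/

theorem interval_gcd_in_Tl :
    ∃ m : ℕ → ℕ → ℕ, ∀ h l n : ℕ, 0 < h → 0 < l → 0 < n →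
      ∃ x : ℕ → ℕ, (∀ i, i < h → 0 < x i) ∧ (∀ i j, i < j → j < h → x i < x j) ∧
        (⋃ i ∈ Finset.range h, Set.Icc (x i) (x i + 2 * l)) ⊆
          Set.Icc n (n + m h l) ∧
        (∀ a ∈ ⋃ i ∈ Finset.range h, Set.Icc (x i) (x i + 2 * l),
         ∀ b ∈ ⋃ i ∈ Finset.range h, Set.Icc (x i) (x i + 2 * l),
            a ≠ b → Nat.gcd a b ∈ Tset l) := by
  refine ⟨fun h l => 2 * Mql h l + h * Qql h l + 2 * l, ?_⟩
  intro h l n hh hl hn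
  classical
  beta_reduce
  set Q := Qql h l with hQdef
  set R := Rql h l with hRdef
  set M := Mql h l with hMdef
  -- basic positivity facts
  have hQpos : 0 < Q := by
    rw [hQdef]
    exact Finset.prod_pos (fun p hp =>
      pow_pos (Nat.Prime.pos (Finset.mem_filter.mp hp).2) _)
  have h2mem : (2 : ℕ) ∈ (Finset.range (Bql h l + 1)).filter Nat.Prime := by
    refine Finset.mem_filter.mpr ⟨Finset.mem_range.mpr ?_, Nat.prime_two⟩
    have : (1 + 1) * (2 * 1 + 1) ≤ (h + 1) * (2 * l + 1) :=
      Nat.mul_le_mul (by omega) (by omega)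
    unfold Bql; omega
  have hQgt : 2 * l + 1 < Q := by
    have hdvd : 2 ^ (rpl 2 l + 1) ∣ Q := by
      rw [hQdef]
      exact Finset.dvd_prod_of_mem (fun q => q ^ (rpl q l + 1)) h2mem
    have h1 := Nat.le_of_dvd hQpos hdvd
    have h2 := rpl_succ_gt (p := 2) l le_rfl
    omega
  have hRpos : 0 < R := by
    rw [hRdef]
    unfold Rql
    refine Finset.prod_pos (fun k hk => Finset.prod_pos (fun w _ => ?_))
    have hk1 : 1 ≤ k := (Finset.mem_Icc.mp hk).1
    have : Q ≤ k * Q := Nat.le_mul_of_pos_left Q (by omega)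
    rw [← hQdef]
    omega
  have hQRne : Q * R ≠ 0 := Nat.mul_ne_zero hQpos.ne' hRpos.ne'
  have hMpos : 0 < M := by
    rw [hMdef]
    exact Finset.prod_pos (fun p hp =>
      pow_pos (Nat.Prime.pos (Nat.mem_primeFactors.mp hp).1) _)
  -- choose good residues
  have hc' : ∀ p : ℕ, ∃ c : ℕ, p.Prime → ∀ i s : ℕ, i < h → s ≤ 2 * l →
      ¬ (p ^ (rpl p l + 1) ∣ c + (i * Q + s)) := by
    intro p
    by_cases hp : p.Prime
    · obtain ⟨c, hc⟩ := exists_good_c hh hl p hp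
      exact ⟨c, fun _ => hc⟩
    · exact ⟨0, fun hpp => absurd hpp hp⟩
  choose c hc using hc'
  obtain ⟨X₀, hX₀⟩ := crt_primes (fun p => rpl p l + 1) c (Q * R).primeFactors
    (fun p hp => (Nat.mem_primeFactors.mp hp).1)
  set X := X₀ % M + M * (n / M + 1) with hXdef
  have hXX₀ : X ≡ X₀ [MOD M] := by
    have h1 : X₀ % M ≡ X₀ [MOD M] := Nat.mod_modEq X₀ M
    have h2 : M * (n / M + 1) ≡ 0 [MOD M] :=
      Nat.modEq_zero_iff_dvd.mpr ⟨n / M + 1, rfl⟩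
    calc X = X₀ % M + M * (n / M + 1) := rfl
      _ ≡ X₀ + 0 [MOD M] := Nat.ModEq.add h1 h2
      _ = X₀ := by omega
  have hXmod : ∀ p ∈ (Q * R).primeFactors, X ≡ c p [MOD p ^ (rpl p l + 1)] := by
    intro p hp
    have hdvd : p ^ (rpl p l + 1) ∣ M := by
      rw [hMdef]
      exact Finset.dvd_prod_of_mem (fun q => q ^ (rpl q l + 1)) hp
    exact (Nat.ModEq.of_dvd hdvd hXX₀).trans (hX₀ p hp)
  have hmulM : M * (n / M + 1) = M * (n / M) + M := by ring
  have hdm := Nat.div_add_mod n M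
  have hmod : n % M < M := Nat.mod_lt n hMpos
  have hX₀m : X₀ % M < M := Nat.mod_lt X₀ hMpos
  have hXgt : n < X := by omega
  have hXle : X ≤ n + 2 * M := by omega
  refine ⟨fun i => X + i * Q, ?_, ?_, ?_, ?_⟩
  · intro i _
    show 0 < X + i * Q
    exact lt_of_lt_of_le (by omega) (Nat.le_add_right X (i * Q))
  · intro i j hij _
    show X + i * Q < X + j * Q
    have : i * Q < j * Q := (Nat.mul_lt_mul_right hQpos).mpr hij
    omega
  · intro y hy
    simp only [Set.mem_iUnion, Finset.mem_range, Set.mem_Icc] at hy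
    obtain ⟨i, hi, hy1, hy2⟩ := hy
    have hiQ : i * Q ≤ h * Q := Nat.mul_le_mul_right Q (by omega)
    constructor
    · omega
    · omega
  · -- gcd condition
    have key : ∀ a b : ℕ, a < b →
        (∃ i s : ℕ, i < h ∧ s ≤ 2 * l ∧ a = X + i * Q + s) →
        (∃ j t : ℕ, j < h ∧ t ≤ 2 * l ∧ b = X + j * Q + t) →
        Nat.gcd a b ∈ Tset l := by
      rintro a b hab ⟨i, s, hi, hs, ha⟩ ⟨j, t, hj, ht, hb⟩
      have hapos : 0 < a := by omega
      have hgpos : 0 < Nat.gcd a b := Nat.gcd_pos_of_pos_left b hapos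
      apply mem_Tset_of_factorization hgpos
      intro p hp
      by_contra hgt
      push_neg at hgt
      have hpk : p ^ (rpl p l + 1) ∣ Nat.gcd a b :=
        (hp.pow_dvd_iff_le_factorization hgpos.ne').mpr (by omega)
      have hpa : p ^ (rpl p l + 1) ∣ a := hpk.trans (Nat.gcd_dvd_left a b)
      have hpb : p ^ (rpl p l + 1) ∣ b := hpk.trans (Nat.gcd_dvd_right a b)
      have hdiff : p ^ (rpl p l + 1) ∣ b - a := Nat.dvd_sub hpb hpa
      have hrgt : 2 * l + 1 < p ^ (rpl p l + 1) := rpl_succ_gt l hp.two_le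
      rcases eq_or_ne i j with rfl | hne
      · -- same block
        have h1 : 0 < b - a := by omega
        have h2 : b - a ≤ 2 * l := by omega
        have := Nat.le_of_dvd h1 hdiff
        omega
      · have hij : i < j := by
          rcases Nat.lt_or_ge i j with h' | h'
          · exact h'
          · exfalso
            have hji : j < i := by omega
            have h2 : (j + 1) * Q ≤ i * Q := Nat.mul_le_mul_right Q (by omega)
            have h3 : (j + 1) * Q = j * Q + Q := by ring
            omega
        set k := j - i with hk
        set w := t + 2 * l - s with hw
        have hik : i + k = j := by omega
        have hkQ : j * Q = i * Q + k * Q := by rw [← hik, Nat.add_mul]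
        have hQle : Q ≤ k * Q := Nat.le_mul_of_pos_left Q (by omega)
        have hd : b - a = k * Q + w - 2 * l := by omega
        have hpd : p ∣ b - a := (dvd_pow_self p (Nat.succ_ne_zero (rpl p l))).trans hdiff
        have hdR : (k * Q + w - 2 * l) ∣ R := by
          have h1 : k ∈ Finset.Icc 1 (h - 1) := Finset.mem_Icc.mpr ⟨by omega, by omega⟩
          have h2 : w ∈ Finset.range (4 * l + 1) := Finset.mem_range.mpr (by omega)
          rw [hRdef]
          unfold Rql
          rw [← hQdef]
          exact dvd_trans (Finset.dvd_prod_of_mem (fun w => k * Q + w - 2 * l) h2)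
            (Finset.dvd_prod_of_mem (fun k => ∏ w ∈ Finset.range (4 * l + 1),
              (k * Q + w - 2 * l)) h1)
        have hpQR : p ∈ (Q * R).primeFactors := by
          refine Nat.mem_primeFactors.mpr ⟨hp, ?_, hQRne⟩
          exact Dvd.dvd.mul_left (dvd_trans (hd ▸ hpd) hdR) Q
        have hXc := hXmod p hpQR
        have hac : a ≡ c p + (i * Q + s) [MOD p ^ (rpl p l + 1)] := by
          have h1 := hXc.add_right (i * Q + s)
          have h2 : X + (i * Q + s) = a := by omega
          rwa [h2] at h1
        have h0 : p ^ (rpl p l + 1) ∣ c p + (i * Q + s) := by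
          have h1 : c p + (i * Q + s) ≡ 0 [MOD p ^ (rpl p l + 1)] :=
            hac.symm.trans (Nat.modEq_zero_iff_dvd.mpr hpa)
          exact Nat.modEq_zero_iff_dvd.mp h1
        exact hc p hp i s hi hs h0
    intro a ha b hb hab
    simp only [Set.mem_iUnion, Finset.mem_range, Set.mem_Icc] at ha hb
    obtain ⟨i, hi, ha1, ha2⟩ := ha
    obtain ⟨j, hj, hb1, hb2⟩ := hb
    have hda : ∃ i' s : ℕ, i' < h ∧ s ≤ 2 * l ∧ a = X + i' * Q + s :=
      ⟨i, a - (X + i * Q), hi, by omega, by omega⟩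
    have hdb : ∃ j' t : ℕ, j' < h ∧ t ≤ 2 * l ∧ b = X + j' * Q + t :=
      ⟨j, b - (X + j * Q), hj, by omega, by omega⟩
    rcases Nat.lt_or_ge a b with h' | h'
    · exact key a b h' hda hdb
    · have h'' : b < a := by omega
      rw [Nat.gcd_comm]
      exact key b a h'' hdb hda
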